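/- ζ-tortoise coordinate as a convergent series: let ζ > 1 and r_s > 0. For every z ∈ (0, 1), the series F(z) := ζ r_s · Σ_{n=0}^{∞} ((n+1)/(n + 1 − 1/ζ)) · z^{n + 1 − 1/ζ} converges, and F is differentiable at z with derivative F'(z) = ζ r_s · z^{−1/ζ} / (1 − z)². -/

import Mathlib

open Real Filter Topology

/-- ζ-tortoise coordinate as a convergent series: for `ζ > 1`, `r_s > 0` and `z ∈ (0,1)`,
the series `F(z) = ζ r_s Σ_{n≥0} ((n+1)/(n+1−1/ζ)) z^{n+1−1/ζ}` converges and `F` is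
differentiable at `z` with `F'(z) = ζ r_s z^{−1/ζ}/(1−z)²`. -/
theorem tortoise_series_hasDerivAt
    (rs ζ : ℝ) (hrs : 0 < rs) (hζ : 1 < ζ)
    (F : ℝ → ℝ)
    (hF : ∀ z : ℝ, F z =
      ζ * rs * ∑' n : ℕ, (((n : ℝ) + 1) / ((n : ℝ) + 1 - 1 / ζ)) * z ^ ((n : ℝ) + 1 - 1 / ζ))
    (z : ℝ) (hz : z ∈ Set.Ioo (0 : ℝ) 1) :
    Summable (fun n : ℕ =>
        (((n : ℝ) + 1) / ((n : ℝ) + 1 - 1 / ζ)) * z ^ ((n : ℝ) + 1 - 1 / ζ)) ∧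
      HasDerivAt F (ζ * rs * z ^ (-(1 / ζ)) / (1 - z) ^ 2) z := by
  obtain ⟨hz0, hz1⟩ := hz
  have hζ0 : 0 < ζ := lt_trans one_pos hζ
  have hinv : 1 / ζ < 1 := (div_lt_one hζ0).mpr hζ
  have hinv0 : 0 < 1 / ζ := by positivity
  -- the denominator is positive
  have hden : ∀ n : ℕ, 0 < (n : ℝ) + 1 - 1 / ζ := by
    intro n
    have hn0 : (0:ℝ) ≤ (n:ℝ) := Nat.cast_nonneg n
    linarith
  set a : ℝ := z / 2 with ha
  set b : ℝ := (1 + z) / 2 with hb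
  have ha0 : 0 < a := by positivity
  have haz : a < z := by simp only [ha]; linarith
  have hzb : z < b := by simp only [hb]; linarith
  have hb1 : b < 1 := by simp only [hb]; linarith
  have hb0 : 0 < b := lt_trans hz0 hzb
  set g : ℕ → ℝ → ℝ := fun n x => (((n : ℝ) + 1) / ((n : ℝ) + 1 - 1 / ζ)) * x ^ ((n : ℝ) + 1 - 1 / ζ) with hg
  set g' : ℕ → ℝ → ℝ := fun n x => ((n : ℝ) + 1) * x ^ ((n : ℝ) - 1 / ζ) with hg'
  set u : ℕ → ℝ := fun n => a ^ (-(1/ζ)) * (((n : ℝ) + 1) * b ^ n) with hu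
  have hu_sum : Summable u := by
    apply Summable.mul_left
    have h1 : Summable (fun n : ℕ => (n : ℝ) * b ^ n) := by
      have := summable_pow_mul_geometric_of_norm_lt_one (R := ℝ) 1
        (r := b) (by rw [Real.norm_eq_abs, abs_of_pos hb0]; exact hb1)
      simpa using this
    have h2 : Summable (fun n : ℕ => b ^ n) := summable_geometric_of_lt_one hb0.le hb1
    have := h1.add h2
    convert this using 2 with n
    · rfl
    ring
  have hderiv : ∀ (n : ℕ) (x : ℝ), x ∈ Set.Ioo a b → HasDerivAt (g n) (g' n x) x := by
    intro n x hx
    have hx0 : x ≠ 0 := (lt_trans ha0 hx.1).ne'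
    have h := (Real.hasDerivAt_rpow_const (p := (n : ℝ) + 1 - 1 / ζ) (Or.inl hx0)).const_mul
      (((n : ℝ) + 1) / ((n : ℝ) + 1 - 1 / ζ))
    have heq : ((n : ℝ) + 1) / ((n : ℝ) + 1 - 1 / ζ) * (((n : ℝ) + 1 - 1 / ζ) * x ^ ((n : ℝ) + 1 - 1 / ζ - 1))
        = ((n : ℝ) + 1) * x ^ ((n : ℝ) - 1 / ζ) := by
      have : (n : ℝ) + 1 - 1 / ζ - 1 = (n : ℝ) - 1 / ζ := by ring
      rw [this, div_mul_eq_mul_div, mul_comm ((n:ℝ) + 1 - 1/ζ), ← mul_assoc,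
        mul_div_assoc, div_self (hden n).ne', mul_one]
    rw [heq] at h
    exact h
  have hbound : ∀ (n : ℕ) (x : ℝ), x ∈ Set.Ioo a b → ‖g' n x‖ ≤ u n := by
    intro n x hx
    have hx0 : 0 < x := lt_trans ha0 hx.1
    have hsplit : x ^ ((n : ℝ) - 1 / ζ) = x ^ n * x ^ (-(1/ζ)) := by
      rw [← Real.rpow_natCast x n, ← Real.rpow_add hx0]
      ring_nf
    have h1 : x ^ n ≤ b ^ n := pow_le_pow_left₀ hx0.le hx.2.le n
    have h2 : x ^ (-(1/ζ)) ≤ a ^ (-(1/ζ)) :=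
      Real.rpow_le_rpow_of_nonpos ha0 hx.1.le (by linarith)
    have hxn : (0:ℝ) ≤ x ^ n := by positivity
    have hxr : (0:ℝ) ≤ x ^ (-(1/ζ)) := Real.rpow_nonneg hx0.le _
    have : ‖g' n x‖ = ((n : ℝ) + 1) * (x ^ n * x ^ (-(1/ζ))) := by
      rw [hg']
      simp only [norm_mul, Real.norm_eq_abs]
      rw [abs_of_nonneg (by positivity : (0:ℝ) ≤ (n:ℝ)+1),
        abs_of_nonneg (Real.rpow_nonneg hx0.le _), hsplit]
    rw [this, hu]
    have hbn : (0:ℝ) ≤ b ^ n := by positivity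
    calc ((n : ℝ) + 1) * (x ^ n * x ^ (-(1/ζ)))
        ≤ ((n : ℝ) + 1) * (b ^ n * a ^ (-(1/ζ))) := by
          apply mul_le_mul_of_nonneg_left _ (by positivity)
          exact mul_le_mul h1 h2 hxr hbn
      _ = a ^ (-(1/ζ)) * (((n : ℝ) + 1) * b ^ n) := by ring
  -- summability at z
  have hsum_z : Summable (fun n => g n z) := by
    apply Summable.of_nonneg_of_le
    · intro n
      exact mul_nonneg (div_nonneg (by positivity) (hden n).le) (Real.rpow_nonneg hz0.le _)
    · intro n
      show g n z ≤ (z ^ ((1:ℝ) - 1/ζ) / (1 - 1/ζ)) * z ^ n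
      have hcoeff : ((n : ℝ) + 1) / ((n : ℝ) + 1 - 1 / ζ) ≤ 1 / (1 - 1/ζ) := by
        rw [div_le_div_iff₀ (hden n) (by linarith)]
        have hn0 : (0:ℝ) ≤ (n:ℝ) := Nat.cast_nonneg n
        nlinarith [hinv0, hn0]
      have hsplit : z ^ ((n : ℝ) + 1 - 1 / ζ) = z ^ ((1:ℝ) - 1/ζ) * z ^ n := by
        rw [← Real.rpow_natCast z n, ← Real.rpow_add hz0]
        ring_nf
      rw [hg]
      simp only
      rw [hsplit]
      have h1 : (0:ℝ) ≤ z ^ ((1:ℝ) - 1/ζ) * z ^ n :=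
        mul_nonneg (Real.rpow_nonneg hz0.le _) (by positivity)
      calc ((n : ℝ) + 1) / ((n : ℝ) + 1 - 1 / ζ) * (z ^ ((1:ℝ) - 1/ζ) * z ^ n)
          ≤ 1 / (1 - 1/ζ) * (z ^ ((1:ℝ) - 1/ζ) * z ^ n) :=
            mul_le_mul_of_nonneg_right hcoeff h1
        _ = (z ^ ((1:ℝ) - 1/ζ) / (1 - 1/ζ)) * z ^ n := by ring
    · exact ((summable_geometric_of_lt_one hz0.le hz1).mul_left _)
  have hmem : z ∈ Set.Ioo a b := ⟨haz, hzb⟩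
  have hDeriv : HasDerivAt (fun y => ∑' n, g n y) (∑' n, g' n z) z :=
    hasDerivAt_tsum_of_isPreconnected hu_sum isOpen_Ioo (isPreconnected_Ioo)
      hderiv hbound hmem hsum_z hmem
  -- compute the sum of derivatives
  have hzn : ‖z‖ < 1 := by rw [Real.norm_eq_abs, abs_of_pos hz0]; exact hz1
  have hsumderiv : (∑' n, g' n z) = z ^ (-(1/ζ)) / (1 - z) ^ 2 := by
    have hsplit : ∀ n : ℕ, g' n z = z ^ (-(1/ζ)) * (((n:ℝ) + 1) * z ^ n) := by
      intro n
      rw [hg']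
      simp only
      rw [show z ^ ((n : ℝ) - 1 / ζ) = z ^ (-(1/ζ)) * z ^ n by
        rw [← Real.rpow_natCast z n, ← Real.rpow_add hz0]; ring_nf]
      ring
    simp_rw [hsplit]
    rw [tsum_mul_left]
    have h1 : (∑' n : ℕ, (((n:ℝ) + 1) * z ^ n)) = 1 / (1 - z)^2 := by
      have hA : (∑' n : ℕ, (n:ℝ) * z ^ n) = z / (1 - z)^2 :=
        tsum_coe_mul_geometric_of_norm_lt_one hzn
      have hB : (∑' n : ℕ, z ^ n) = (1 - z)⁻¹ := tsum_geometric_of_lt_one hz0.le hz1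
      have hs1 : Summable (fun n : ℕ => (n:ℝ) * z ^ n) := by
        have := summable_pow_mul_geometric_of_norm_lt_one (R := ℝ) 1 (r := z) hzn
        simpa using this
      have hs2 : Summable (fun n : ℕ => z ^ n) := summable_geometric_of_lt_one hz0.le hz1
      have : (∑' n : ℕ, (((n:ℝ) + 1) * z ^ n)) = (∑' n : ℕ, ((n:ℝ) * z ^ n + z ^ n)) := by
        congr 1; funext n; ring
      rw [this, Summable.tsum_add hs1 hs2, hA, hB]
      have h1z : (1:ℝ) - z ≠ 0 := by linarith
      field_simp
      ring
    rw [h1]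
    ring
  constructor
  · exact hsum_z
  · have hFeq : F = fun y => ζ * rs * ∑' n, g n y := funext hF
    rw [hFeq]
    have := hDeriv.const_mul (ζ * rs)
    rw [hsumderiv] at this
    convert this using 1
    · rfl
    · rfl
    ring
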